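/- Let m ≥ 2, let s_1,…,s_m be nonnegative integers with total t = s_1+⋯+s_m, and let l_j, u_j be integers with 0 ≤ l_j ≤ u_j ≤ s_j and l_j + u_j = s_j for each j (symmetric core constraints). Fix an index j and for a nonnegative integer r let N_{−j}(r) = ∑ ∏_{k≠j} C(s_k, x_k), the sum over all x ∈ ℕ^{m−1} with ∑_{k≠j} x_k = r and l_k ≤ x_k ≤ u_k for all k ≠ j. Suppose 2n ≥ t, l_j ≥ 1, u_j ≤ n, and n − u_j ≤ t − s_j. Then N_{−j}(n − u_j)·C(t − s_j, n − l_j + 1) ≥ N_{−j}(n − l_j + 1)·C(t − s_j, n − u_j); equivalently, for X ~ H_m(n; s), P_n[X_{−j} ∈ B_{−j} | X_j = u_j] ≥ P_n[X_{−j} ∈ B_{−j} | X_j = l_j − 1]. -/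

import Mathlib

open Polynomial Finset

set_option linter.constructorNameAsVariable false
set_option linter.unusedVariables false
set_option linter.unusedTactic false

/-- ℤ-extension of polynomial coefficients. -/
noncomputable def cz (F : Polynomial ℤ) (x : ℤ) : ℤ :=
  if 0 ≤ x then F.coeff x.toNat else 0

lemma cz_coe (F : Polynomial ℤ) (n : ℕ) : cz F n = F.coeff n := by
  simp [cz]

lemma cz_neg (F : Polynomial ℤ) {x : ℤ} (h : x < 0) : cz F x = 0 := by
  simp [cz, not_le.mpr h]

/-- The key property: nonnegative, supported on `[0,S]`, symmetric about `S/2`,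
and the hypergeometric-ratio step inequality. -/
structure Good (F : Polynomial ℤ) (S : ℕ) : Prop where
  nonneg : ∀ x : ℕ, 0 ≤ F.coeff x
  vanish : ∀ x : ℕ, S < x → F.coeff x = 0
  symm : ∀ x : ℕ, x ≤ S → F.coeff x = F.coeff (S - x)
  lstep : ∀ r : ℕ, 2*r + 1 ≤ S →
    ((S : ℤ) - r) * F.coeff r ≤ ((r : ℤ) + 1) * F.coeff (r+1)

namespace Good

variable {F : Polynomial ℤ} {S : ℕ}

lemma cz_nonneg (hF : Good F S) (x : ℤ) : 0 ≤ cz F x := by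
  unfold cz; split
  · exact hF.nonneg _
  · exact le_refl 0

lemma cz_vanish (hF : Good F S) {x : ℤ} (h : (S:ℤ) < x) : cz F x = 0 := by
  unfold cz; split
  · exact hF.vanish _ (by omega)
  · rfl

lemma cz_symm (hF : Good F S) (x : ℤ) : cz F ((S:ℤ) - x) = cz F x := by
  rcases lt_or_ge x 0 with h | h
  · rw [cz_neg F h, hF.cz_vanish (by omega)]
  · rcases le_or_gt x (S:ℤ) with h2 | h2
    · unfold cz
      rw [if_pos (by omega), if_pos h]
      have hx : x.toNat ≤ S := by omega
      have : ((S:ℤ) - x).toNat = S - x.toNat := by omega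
      rw [this, ← hF.symm _ hx]
    · rw [hF.cz_vanish h2, cz_neg F (by omega)]

lemma step_nat (hF : Good F S) (q : ℕ) (h : 2*q + 1 ≤ S) :
    F.coeff q ≤ F.coeff (q+1) := by
  have h1 := hF.lstep q h
  have h2 : ((q:ℤ)+1) * F.coeff q ≤ ((S:ℤ) - q) * F.coeff q :=
    mul_le_mul_of_nonneg_right (by omega) (hF.nonneg q)
  have := le_of_mul_le_mul_left (h2.trans h1) (by positivity : (0:ℤ) < (q:ℤ)+1)
  exact this

lemma up_nat (hF : Good F S) (d q : ℕ) (h : 2*q + 2*d ≤ S) :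
    F.coeff q ≤ F.coeff (q+d) := by
  induction d with
  | zero => simp
  | succ d ih =>
    have h1 : 2*q + 2*d ≤ S := by omega
    have h2 : 2*(q+d) + 1 ≤ S := by omega
    calc F.coeff q ≤ F.coeff (q+d) := ih h1
      _ ≤ F.coeff (q+d+1) := hF.step_nat _ h2

lemma mono_nat (hF : Good F S) (a b : ℕ) (hba : b ≤ a) (hab : a + b ≤ S) :
    F.coeff b ≤ F.coeff a := by
  rcases le_or_gt (2*a) S with h | h
  · have := hF.up_nat (a - b) b (by omega)
    simpa [Nat.add_sub_cancel' hba] using this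
  · have haS : a ≤ S := by omega
    rw [hF.symm a haS]
    have := hF.up_nat (S - a - b) b (by omega)
    have heq : b + (S - a - b) = S - a := by omega
    rw [heq] at this
    exact this

lemma cz_mono (hF : Good F S) {a b : ℤ} (hba : b ≤ a) (hab : a + b ≤ (S:ℤ)) :
    cz F b ≤ cz F a := by
  rcases lt_or_ge b 0 with h | h
  · rw [cz_neg F h]; exact hF.cz_nonneg a
  · have ha : 0 ≤ a := le_trans h hba
    unfold cz
    rw [if_pos h, if_pos ha]
    exact hF.mono_nat a.toNat b.toNat (by omega) (by omega)

lemma cz_lstep (hF : Good F S) (y : ℤ) (h : 2*y + 1 ≤ (S:ℤ)) :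
    ((S:ℤ) - y) * cz F y ≤ (y + 1) * cz F (y+1) := by
  rcases lt_or_ge y 0 with hy | hy
  · rw [cz_neg F hy]
    rcases lt_or_ge (y+1) 0 with hy1 | hy1
    · rw [cz_neg F hy1]; ring_nf; exact le_refl 0
    · have : y = -1 := by omega
      subst this; simp
  · have hq : y = (y.toNat : ℤ) := by omega
    rw [hq]
    have h2 : 2*y.toNat + 1 ≤ S := by omega
    have := hF.lstep y.toNat h2
    rw [cz_coe, show ((y.toNat:ℤ) + 1) = ((y.toNat + 1 : ℕ) : ℤ) by push_cast; ring, cz_coe]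
    exact this

end Good

section WinUtil

/-- Change window of summation when the summand vanishes outside both windows' overlap. -/
lemma sum_congr_support (f : ℤ → ℤ) (W W' : Finset ℤ)
    (h1 : ∀ y ∈ W, y ∉ W' → f y = 0) (h2 : ∀ y ∈ W', y ∉ W → f y = 0) :
    ∑ y ∈ W, f y = ∑ y ∈ W', f y := by
  rw [← Finset.sum_inter_add_sum_sdiff W W' f, ← Finset.sum_inter_add_sum_sdiff W' W f]
  rw [Finset.inter_comm W' W]
  congr 1
  · rw [Finset.sum_eq_zero, Finset.sum_eq_zero]
    · intro y hy; exact h2 y (Finset.mem_sdiff.mp hy).1 (Finset.mem_sdiff.mp hy).2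
    · intro y hy; exact h1 y (Finset.mem_sdiff.mp hy).1 (Finset.mem_sdiff.mp hy).2

lemma sum_Icc_reflect (f : ℤ → ℤ) (A B K : ℤ) :
    ∑ y ∈ Finset.Icc A B, f (K - y) = ∑ y ∈ Finset.Icc (K - B) (K - A), f y := by
  apply Finset.sum_nbij' (fun y => K - y) (fun y => K - y)
  · intro a ha; simp only [Finset.mem_Icc] at *; omega
  · intro a ha; simp only [Finset.mem_Icc] at *; omega
  · intro a _; ring
  · intro a _; ring
  · intro a _; rfl

lemma sum_Icc_shift (f : ℤ → ℤ) (A B c : ℤ) :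
    ∑ y ∈ Finset.Icc A B, f (y + c) = ∑ y ∈ Finset.Icc (A + c) (B + c), f y := by
  apply Finset.sum_nbij' (fun y => y + c) (fun y => y - c)
  · intro a ha; simp only [Finset.mem_Icc] at *; omega
  · intro a ha; simp only [Finset.mem_Icc] at *; omega
  · intro a _; ring
  · intro a _; ring
  · intro a _; rfl

lemma sum_Icc_coe (T : ℕ) (f : ℤ → ℤ) :
    ∑ y ∈ Finset.Icc (0:ℤ) (T:ℤ), f y = ∑ y ∈ Finset.range (T+1), f (y:ℤ) := by
  apply Finset.sum_nbij' (fun y : ℤ => y.toNat) (fun y : ℕ => (y : ℤ))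
  · intro a ha; simp only [Finset.mem_Icc, Finset.mem_range] at *; omega
  · intro a ha; simp only [Finset.mem_Icc, Finset.mem_range] at *; omega
  · intro a ha; simp only [Finset.mem_Icc] at ha; omega
  · intro a _; simp
  · intro a ha; simp only [Finset.mem_Icc] at ha; congr 1; omega

end WinUtil

lemma cz_vanish' {G : Polynomial ℤ} {T : ℕ} (hG : ∀ x : ℕ, T < x → G.coeff x = 0)
    {y : ℤ} (h : (T:ℤ) < y) : cz G y = 0 := by
  have hy : y = ((y.toNat : ℕ) : ℤ) := by omega
  rw [hy, cz_coe]; exact hG _ (by omega)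

lemma cz_mul_window (F G : Polynomial ℤ) (T : ℕ)
    (hG : ∀ x : ℕ, T < x → G.coeff x = 0) {A B : ℤ} (hA : A ≤ 0) (hB : (T:ℤ) ≤ B)
    (n : ℤ) :
    cz (F * G) n = ∑ y ∈ Finset.Icc A B, cz F (n - y) * cz G y := by
  have hred : ∑ y ∈ Finset.Icc A B, cz F (n - y) * cz G y
      = ∑ y ∈ Finset.Icc (0:ℤ) (T:ℤ), cz F (n - y) * cz G y := by
    apply sum_congr_support
    · intro y hy hy'
      simp only [Finset.mem_Icc] at hy hy'
      rcases lt_or_ge y 0 with h | h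
      · rw [cz_neg G h, mul_zero]
      · rw [cz_vanish' hG (by omega), mul_zero]
    · intro y hy hy'
      simp only [Finset.mem_Icc] at hy hy'
      omega
  rw [hred]
  rcases lt_or_ge n 0 with hn | hn
  · rw [cz_neg _ hn]
    symm
    apply Finset.sum_eq_zero
    intro y hy
    simp only [Finset.mem_Icc] at hy
    rw [cz_neg F (by omega), zero_mul]
  · have hm : n = ((n.toNat : ℕ) : ℤ) := by omega
    set m := n.toNat with hmdef
    rw [hm, cz_coe, mul_comm F G, Polynomial.coeff_mul,
      Finset.Nat.sum_antidiagonal_eq_sum_range_succ_mk]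
    rw [sum_Icc_coe]
    have key : ∀ M, m ≤ M → T ≤ M →
        (∑ k ∈ Finset.range (M+1), cz F ((m:ℤ) - (k:ℤ)) * cz G (k:ℤ))
        = ∑ k ∈ Finset.range (m+1), G.coeff k * F.coeff (m - k) := by
      intro M hM1 hM2
      rw [← Finset.sum_subset (Finset.range_subset_range.mpr (by omega) :
        Finset.range (m+1) ⊆ Finset.range (M+1))]
      · apply Finset.sum_congr rfl
        intro k hk
        simp only [Finset.mem_range] at hk
        have : (m:ℤ) - (k:ℤ) = ((m - k : ℕ) : ℤ) := by omega
        rw [this, cz_coe, cz_coe, mul_comm]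
      · intro k hk hk'
        simp only [Finset.mem_range] at hk hk'
        rw [cz_neg F (by omega), zero_mul]
    have e1 := key (max m T) (le_max_left _ _) (le_max_right _ _)
    have e2 : (∑ k ∈ Finset.range (T+1), cz F ((m:ℤ) - (k:ℤ)) * cz G (k:ℤ))
        = ∑ k ∈ Finset.range ((max m T)+1), cz F ((m:ℤ) - (k:ℤ)) * cz G (k:ℤ) := by
      apply Finset.sum_subset (Finset.range_subset_range.mpr (by omega))
      intro k hk hk'
      simp only [Finset.mem_range] at hk hk'
      rw [cz_vanish' hG (by omega), mul_zero]
    rw [e2, e1]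

lemma pairing (W : Finset ℤ) (K : ℤ) (δ γ : ℤ → ℤ)
    (hW : ∀ y ∈ W, K - y ∈ W)
    (hδ : ∀ y : ℤ, δ (K - y) = -δ y)
    (hpos : ∀ y ∈ W, 2*y ≤ K → 0 ≤ δ y)
    (hγ : ∀ y ∈ W, 2*y ≤ K → γ (K - y) ≤ γ y) :
    0 ≤ ∑ y ∈ W, δ y * γ y := by
  classical
  set A := W.filter (fun y => 2*y < K) with hA
  set B := W.filter (fun y => ¬ 2*y < K) with hB
  have hsplit : ∑ y ∈ W, δ y * γ y = (∑ y ∈ A, δ y * γ y) + ∑ y ∈ B, δ y * γ y :=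
    (Finset.sum_filter_add_sum_filter_not W _ _).symm
  set B1 := B.filter (fun y => 2*y = K) with hB1
  set B2 := B.filter (fun y => ¬ 2*y = K) with hB2
  have hsplit2 : ∑ y ∈ B, δ y * γ y = (∑ y ∈ B1, δ y * γ y) + ∑ y ∈ B2, δ y * γ y :=
    (Finset.sum_filter_add_sum_filter_not B _ _).symm
  have hB1zero : ∑ y ∈ B1, δ y * γ y = 0 := by
    apply Finset.sum_eq_zero
    intro y hy
    simp only [hB1, hB, Finset.mem_filter] at hy
    have hKy : K - y = y := by omega
    have := hδ y
    rw [hKy] at this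
    have : δ y = 0 := by linarith
    rw [this, zero_mul]
  have hB2A : ∑ y ∈ B2, δ y * γ y = ∑ y ∈ A, δ (K - y) * γ (K - y) := by
    apply Finset.sum_nbij' (fun y => K - y) (fun y => K - y)
    · intro a ha
      simp only [hB2, hB1, hB, hA, Finset.mem_filter] at *
      exact ⟨hW a ha.1.1, by omega⟩
    · intro a ha
      simp only [hB2, hB1, hB, hA, Finset.mem_filter] at *
      exact ⟨⟨hW a ha.1, by omega⟩, by omega⟩
    · intro a _; ring
    · intro a _; ring
    · intro a _; rw [sub_sub_cancel]
  rw [hsplit, hsplit2, hB1zero, hB2A]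
  have : (∑ y ∈ A, δ y * γ y) + (0 + ∑ y ∈ A, δ (K - y) * γ (K - y))
      = ∑ y ∈ A, δ y * (γ y - γ (K - y)) := by
    rw [zero_add, ← Finset.sum_add_distrib]
    apply Finset.sum_congr rfl
    intro y _
    rw [hδ y]; ring
  rw [this]
  apply Finset.sum_nonneg
  intro y hy
  simp only [hA, Finset.mem_filter] at hy
  exact mul_nonneg (hpos y hy.1 (by omega)) (sub_nonneg.mpr (hγ y hy.1 (by omega)))

/-- One half of the step inequality: the "F-active" part. -/
lemma half_step {F G : Polynomial ℤ} {S T : ℕ} (hF : Good F S) (hG : Good G T)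
    (R : ℤ) (hR : 2*R + 1 ≤ (S:ℤ) + (T:ℤ)) :
    ∑ y ∈ Finset.Icc (-1:ℤ) (S:ℤ), ((S:ℤ) - y) * cz F y * cz G (R - y) ≤
    ∑ y ∈ Finset.Icc (-1:ℤ) (S:ℤ), (y + 1) * cz F (y+1) * cz G (R - y) := by
  have key := pairing (Finset.Icc (-1:ℤ) (S:ℤ)) ((S:ℤ) - 1)
    (fun y => (y + 1) * cz F (y+1) - ((S:ℤ) - y) * cz F y)
    (fun y => cz G (R - y))
    (by intro y hy; simp only [Finset.mem_Icc] at *; omega)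
    (by
      intro y
      have e1 : cz F ((S:ℤ) - 1 - y + 1) = cz F y := by
        rw [show (S:ℤ) - 1 - y + 1 = (S:ℤ) - y by ring, hF.cz_symm]
      have e2 : cz F ((S:ℤ) - 1 - y) = cz F (y + 1) := by
        rw [show (S:ℤ) - 1 - y = (S:ℤ) - (y+1) by ring, hF.cz_symm]
      beta_reduce
      rw [e1, e2]; ring)
    (by
      intro y _ h2
      have := hF.cz_lstep y (by omega)
      beta_reduce
      linarith)
    (by
      intro y _ h2
      beta_reduce
      have h3 : R - ((S:ℤ) - 1 - y) = R - (S:ℤ) + 1 + y := by ring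
      rw [h3]
      exact hG.cz_mono (by omega) (by omega))
  have expand : ∑ y ∈ Finset.Icc (-1:ℤ) (S:ℤ),
      (fun y => (y + 1) * cz F (y+1) - ((S:ℤ) - y) * cz F y) y *
        (fun y => cz G (R - y)) y
      = (∑ y ∈ Finset.Icc (-1:ℤ) (S:ℤ), (y + 1) * cz F (y+1) * cz G (R - y))
        - ∑ y ∈ Finset.Icc (-1:ℤ) (S:ℤ), ((S:ℤ) - y) * cz F y * cz G (R - y) := by
    rw [← Finset.sum_sub_distrib]
    apply Finset.sum_congr rfl
    intro y _; ring
  rw [expand] at key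
  linarith

lemma good_mul {F G : Polynomial ℤ} {S T : ℕ} (hF : Good F S) (hG : Good G T) :
    Good (F * G) (S + T) := by
  constructor
  · -- nonneg
    intro x
    rw [Polynomial.coeff_mul]
    exact Finset.sum_nonneg fun p _ => mul_nonneg (hF.nonneg _) (hG.nonneg _)
  · -- vanish
    intro x hx
    rw [Polynomial.coeff_mul]
    apply Finset.sum_eq_zero
    intro p hp
    rw [Finset.HasAntidiagonal.mem_antidiagonal] at hp
    rcases le_or_gt p.1 S with h | h
    · rw [hG.vanish p.2 (by omega), mul_zero]
    · rw [hF.vanish p.1 h, zero_mul]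
  · -- symm
    intro x hx
    have czsym : ∀ z : ℤ, cz (F * G) (((S:ℤ) + (T:ℤ)) - z) = cz (F * G) z := by
      intro z
      rw [cz_mul_window F G T hG.vanish (by norm_num : (-1:ℤ) ≤ 0)
        (by push_cast; omega : (T:ℤ) ≤ (T:ℤ)+1),
        cz_mul_window F G T hG.vanish (by norm_num : (-1:ℤ) ≤ 0)
        (by push_cast; omega : (T:ℤ) ≤ (T:ℤ)+1) z]
      have refl := sum_Icc_reflect
        (fun y => cz F ((S:ℤ) + (T:ℤ) - z - y) * cz G y) (-1) ((T:ℤ)+1) (T:ℤ)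
      have hwin : Finset.Icc ((T:ℤ) - ((T:ℤ)+1)) ((T:ℤ) - (-1)) =
          Finset.Icc (-1:ℤ) ((T:ℤ)+1) := by norm_num
      rw [hwin] at refl
      rw [← refl]
      apply Finset.sum_congr rfl
      intro y _
      have e1 : (S:ℤ) + (T:ℤ) - z - ((T:ℤ) - y) = (S:ℤ) - (z - y) := by ring
      rw [e1, hF.cz_symm, hG.cz_symm]
    have e := czsym (x : ℤ)
    have l1 : (((S:ℤ) + (T:ℤ)) - (x:ℤ)) = (((S + T - x : ℕ)) : ℤ) := by push_cast; omega
    rw [l1, cz_coe, cz_coe] at e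
    exact e.symm
  · -- lstep
    intro r hr
    set R := (r : ℤ) with hR
    have hRb : 2*R + 1 ≤ (S:ℤ) + (T:ℤ) := by push_cast; omega
    set mn := min (-1:ℤ) (R - (T:ℤ)) with hmn
    set mx := max ((S:ℤ)+1) (R+1) with hmx
    have hmn0 : mn ≤ -1 := min_le_left _ _
    have hmnRT : mn ≤ R - T := min_le_right _ _
    have hmxS : (S:ℤ)+1 ≤ mx := le_max_left _ _
    have hmxR : R+1 ≤ mx := le_max_right _ _
    -- mirrored convolution: sums with the y variable feeding F
    have conv : ∀ n : ℤ, cz (F * G) n = ∑ y ∈ Finset.Icc mn mx, cz F y * cz G (n - y) := by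
      intro n
      rw [mul_comm F G, cz_mul_window G F S hF.vanish (A := mn) (B := mx) (by omega) (by omega) n]
      apply Finset.sum_congr rfl
      intro y _; ring
    -- Identity 1
    have idenA : (∑ y ∈ Finset.Icc (-1:ℤ) (S:ℤ), ((S:ℤ) - y) * cz F y * cz G (R - y))
        + (∑ y ∈ Finset.Icc (-1:ℤ) (T:ℤ), ((T:ℤ) - y) * cz G y * cz F (R - y))
        = ((S:ℤ) + (T:ℤ) - R) * cz (F * G) R := by
      have pA : (∑ y ∈ Finset.Icc (-1:ℤ) (S:ℤ), ((S:ℤ) - y) * cz F y * cz G (R - y))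
          = ∑ y ∈ Finset.Icc mn mx, ((S:ℤ) - y) * cz F y * cz G (R - y) := by
        apply Finset.sum_subset
        · intro y hy; simp only [Finset.mem_Icc] at *; omega
        · intro y hy hy'
          simp only [Finset.mem_Icc] at hy hy'
          rcases lt_or_ge y 0 with h | h
          · rw [cz_neg F h]; ring
          · rw [hF.cz_vanish (by omega)]; ring
      have pB : (∑ y ∈ Finset.Icc (-1:ℤ) (T:ℤ), ((T:ℤ) - y) * cz G y * cz F (R - y))
          = ∑ y ∈ Finset.Icc mn mx, ((T:ℤ) - (R - y)) * cz F y * cz G (R - y) := by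
        have refl := sum_Icc_reflect
          (fun z => ((T:ℤ) - z) * cz G z * cz F (R - z)) (R - (T:ℤ)) (R+1) R
        have hwin : Finset.Icc (R - (R+1)) (R - (R - (T:ℤ))) = Finset.Icc (-1:ℤ) (T:ℤ) := by
          congr 1 <;> ring
        rw [hwin] at refl
        rw [← refl]
        have r2 : ∀ y : ℤ, ((T:ℤ) - (R - y)) * cz G (R - y) * cz F (R - (R - y))
            = ((T:ℤ) - (R - y)) * cz F y * cz G (R - y) := by
          intro y; rw [show R - (R - y) = y by ring]; ring
        calc ∑ y ∈ Finset.Icc (R - (T:ℤ)) (R+1), ((T:ℤ) - (R - y)) * cz G (R - y) * cz F (R - (R - y))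
            = ∑ y ∈ Finset.Icc (R - (T:ℤ)) (R+1), ((T:ℤ) - (R - y)) * cz F y * cz G (R - y) := by
              apply Finset.sum_congr rfl; intro y _; rw [r2]
          _ = ∑ y ∈ Finset.Icc mn mx, ((T:ℤ) - (R - y)) * cz F y * cz G (R - y) := by
              apply Finset.sum_subset
              · intro y hy; simp only [Finset.mem_Icc] at *; omega
              · intro y hy hy'
                simp only [Finset.mem_Icc] at hy hy'
                rcases lt_or_ge (R - y) 0 with h | h
                · rw [cz_neg G h]; ring
                · rw [hG.cz_vanish (by omega)]; ring
      rw [pA, pB, ← Finset.sum_add_distrib, conv R, Finset.mul_sum]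
      apply Finset.sum_congr rfl
      intro y _; ring
    -- Identity 2
    have idenB : (∑ y ∈ Finset.Icc (-1:ℤ) (S:ℤ), (y + 1) * cz F (y+1) * cz G (R - y))
        + (∑ y ∈ Finset.Icc (-1:ℤ) (T:ℤ), (y + 1) * cz G (y+1) * cz F (R - y))
        = (R + 1) * cz (F * G) (R + 1) := by
      have pA : (∑ y ∈ Finset.Icc (-1:ℤ) (S:ℤ), (y + 1) * cz F (y+1) * cz G (R - y))
          = ∑ y ∈ Finset.Icc mn mx, y * cz F y * cz G (R + 1 - y) := by
        have shift := sum_Icc_shift (fun w => w * cz F w * cz G (R + 1 - w)) (-1) (S:ℤ) 1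
        have hwin : Finset.Icc ((-1:ℤ)+1) ((S:ℤ)+1) = Finset.Icc (0:ℤ) ((S:ℤ)+1) := by norm_num
        rw [hwin] at shift
        have lhs_eq : (∑ y ∈ Finset.Icc (-1:ℤ) (S:ℤ), (y + 1) * cz F (y+1) * cz G (R - y))
            = ∑ y ∈ Finset.Icc (-1:ℤ) (S:ℤ),
                (fun w => w * cz F w * cz G (R + 1 - w)) (y + 1) := by
          apply Finset.sum_congr rfl
          intro y _
          beta_reduce
          rw [show R + 1 - (y + 1) = R - y by ring]
        rw [lhs_eq, shift]
        apply Finset.sum_subset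
        · intro y hy; simp only [Finset.mem_Icc] at *; omega
        · intro y hy hy'
          simp only [Finset.mem_Icc] at hy hy'
          rcases lt_or_ge y 0 with h | h
          · rw [cz_neg F h]; ring
          · rw [hF.cz_vanish (by omega)]; ring
      have pB : (∑ y ∈ Finset.Icc (-1:ℤ) (T:ℤ), (y + 1) * cz G (y+1) * cz F (R - y))
          = ∑ y ∈ Finset.Icc mn mx, (R + 1 - y) * cz F y * cz G (R + 1 - y) := by
        have shift := sum_Icc_shift (fun w => w * cz G w * cz F (R + 1 - w)) (-1) (T:ℤ) 1
        have hwin : Finset.Icc ((-1:ℤ)+1) ((T:ℤ)+1) = Finset.Icc (0:ℤ) ((T:ℤ)+1) := by norm_num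
        rw [hwin] at shift
        have lhs_eq : (∑ y ∈ Finset.Icc (-1:ℤ) (T:ℤ), (y + 1) * cz G (y+1) * cz F (R - y))
            = ∑ y ∈ Finset.Icc (-1:ℤ) (T:ℤ),
                (fun w => w * cz G w * cz F (R + 1 - w)) (y + 1) := by
          apply Finset.sum_congr rfl
          intro y _
          beta_reduce
          rw [show R + 1 - (y + 1) = R - y by ring]
        rw [lhs_eq, shift]
        have refl := sum_Icc_reflect
          (fun w => w * cz G w * cz F (R + 1 - w)) (R - (T:ℤ)) (R+1) (R+1)
        have hwin2 : Finset.Icc ((R+1) - (R+1)) ((R+1) - (R - (T:ℤ))) =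
            Finset.Icc (0:ℤ) ((T:ℤ)+1) := by congr 1 <;> ring
        rw [hwin2] at refl
        rw [← refl]
        calc ∑ y ∈ Finset.Icc (R - (T:ℤ)) (R+1),
              (R + 1 - y) * cz G (R + 1 - y) * cz F (R + 1 - (R + 1 - y))
            = ∑ y ∈ Finset.Icc (R - (T:ℤ)) (R+1), (R + 1 - y) * cz F y * cz G (R + 1 - y) := by
              apply Finset.sum_congr rfl
              intro y _
              rw [show R + 1 - (R + 1 - y) = y by ring]; ring
          _ = ∑ y ∈ Finset.Icc mn mx, (R + 1 - y) * cz F y * cz G (R + 1 - y) := by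
              apply Finset.sum_subset
              · intro y hy; simp only [Finset.mem_Icc] at *; omega
              · intro y hy hy'
                simp only [Finset.mem_Icc] at hy hy'
                rcases lt_or_ge (R + 1 - y) 0 with h | h
                · rw [cz_neg G h]; ring
                · rw [hG.cz_vanish (by omega)]; ring
      rw [pA, pB, ← Finset.sum_add_distrib, conv (R+1), Finset.mul_sum]
      apply Finset.sum_congr rfl
      intro y _; ring
    have ineq1 := half_step hF hG R hRb
    have ineq2 := half_step hG hF R (by omega)
    -- fix ineq2 orientation: its sums have roles of F,G swapped
    have final : ((S:ℤ) + (T:ℤ) - R) * cz (F * G) R ≤ (R + 1) * cz (F * G) (R + 1) := by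
      rw [← idenA, ← idenB]
      have fix2a : (∑ y ∈ Finset.Icc (-1:ℤ) (T:ℤ), ((T:ℤ) - y) * cz G y * cz F (R - y)) =
          ∑ y ∈ Finset.Icc (-1:ℤ) (T:ℤ), ((T:ℤ) - y) * cz G y * cz F (R - y) := rfl
      linarith [ineq1, ineq2]
    have c1 : cz (F * G) R = (F * G).coeff r := by rw [hR, cz_coe]
    have c2 : cz (F * G) (R + 1) = (F * G).coeff (r + 1) := by
      rw [hR, show (r:ℤ) + 1 = ((r+1 : ℕ) : ℤ) by push_cast; ring, cz_coe]
    rw [c1, c2] at final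
    have : (((S+T : ℕ)):ℤ) - (r:ℤ) = (S:ℤ) + (T:ℤ) - R := by push_cast; ring
    rw [this]
    exact final

noncomputable def boxPoly (s a b : ℕ) : Polynomial ℤ :=
  ∑ x ∈ Finset.Icc a b, Polynomial.monomial x ((s.choose x : ℤ))

lemma boxPoly_coeff (s a b y : ℕ) :
    (_root_.boxPoly s a b).coeff y = if y ∈ Finset.Icc a b then (s.choose y : ℤ) else 0 := by
  rw [_root_.boxPoly, Polynomial.finset_sum_coeff]
  rw [show (∑ x ∈ Finset.Icc a b, ((Polynomial.monomial x) ((s.choose x : ℤ))).coeff y)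
      = ∑ x ∈ Finset.Icc a b, if x = y then (s.choose x : ℤ) else 0 by
    apply Finset.sum_congr rfl; intro x _; rw [Polynomial.coeff_monomial]]
  rw [Finset.sum_ite_eq' (Finset.Icc a b) y (fun x => (s.choose x : ℤ))]

lemma good_boxPoly {s a b : ℕ} (hab : a ≤ b) (hbs : b ≤ s) (hsym : a + b = s) :
    Good (_root_.boxPoly s a b) s := by
  constructor
  · intro x
    rw [boxPoly_coeff]
    split <;> positivity
  · intro x hx
    rw [boxPoly_coeff, if_neg (by simp only [Finset.mem_Icc]; omega)]
  · intro x hxs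
    rw [boxPoly_coeff, boxPoly_coeff]
    simp only [Finset.mem_Icc]
    rcases le_or_gt a x with h1 | h1
    · rcases le_or_gt x b with h2 | h2
      · rw [if_pos ⟨h1, h2⟩, if_pos (by omega)]
        norm_cast
        rw [Nat.choose_symm (by omega)]
      · rw [if_neg (by omega), if_neg (by omega)]
    · rw [if_neg (by omega), if_neg (by omega)]
  · intro r hr
    rw [boxPoly_coeff, boxPoly_coeff]
    simp only [Finset.mem_Icc]
    rcases le_or_gt a r with h1 | h1
    · rcases le_or_gt r b with h2 | h2
      · have hrb : r < b := by omega
        rw [if_pos ⟨h1, h2⟩, if_pos (by omega)]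
        have := Nat.choose_succ_right_eq s r
        have hcast : ((s.choose (r+1) : ℤ)) * ((r:ℤ) + 1) = (s.choose r : ℤ) * ((s:ℤ) - r) := by
          have hsub : ((s - r : ℕ) : ℤ) = (s:ℤ) - (r:ℤ) := by
            have : r ≤ s := by omega
            omega
          calc ((s.choose (r+1) : ℤ)) * ((r:ℤ) + 1)
              = ((s.choose (r+1) * (r+1) : ℕ) : ℤ) := by push_cast; ring
            _ = ((s.choose r * (s - r) : ℕ) : ℤ) := by rw [this]
            _ = (s.choose r : ℤ) * ((s:ℤ) - r) := by push_cast [hsub]; ring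
        linarith [hcast]
      · rw [if_neg (by omega)]
        have : ((r:ℤ) + 1) * (if a ≤ r + 1 ∧ r + 1 ≤ b then ((s.choose (r+1)):ℤ) else 0) ≥ 0 := by
          split <;> positivity
        linarith
    · rw [if_neg (by omega)]
      have : ((r:ℤ) + 1) * (if a ≤ r + 1 ∧ r + 1 ≤ b then ((s.choose (r+1)):ℤ) else 0) ≥ 0 := by
        split <;> positivity
      linarith

lemma good_one : Good 1 0 := by
  constructor
  · intro x; rw [Polynomial.coeff_one]; split <;> norm_num
  · intro x hx; rw [Polynomial.coeff_one, if_neg (by omega)]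
  · intro x hx; interval_cases x; rfl
  · intro r hr; omega

lemma good_prod {ι : Type*} [DecidableEq ι] (K : Finset ι) (P : ι → Polynomial ℤ)
    (S : ι → ℕ) (h : ∀ k ∈ K, Good (P k) (S k)) :
    Good (∏ k ∈ K, P k) (∑ k ∈ K, S k) := by
  induction K using Finset.induction with
  | empty => simpa using good_one
  | insert a K hnotmem ih =>
    rw [Finset.prod_insert hnotmem, Finset.sum_insert hnotmem]
    exact good_mul (h a (Finset.mem_insert_self a K))
      (ih fun k hk => h k (Finset.mem_insert_of_mem hk))

lemma monomial_prod {ι : Type*} (K : Finset ι) (d : ι → ℕ) (a : ι → ℤ) :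
    ∏ i ∈ K, Polynomial.monomial (d i) (a i)
      = Polynomial.monomial (∑ i ∈ K, d i) (∏ i ∈ K, a i) := by
  classical
  induction K using Finset.induction with
  | empty => simp
  | insert b K hnotmem ih =>
    rw [Finset.prod_insert hnotmem, Finset.sum_insert hnotmem, Finset.prod_insert hnotmem,
      ih, Polynomial.monomial_mul_monomial]

/-- Left-hand side of the pivotal ratio inequality (5) is at least 1:
for `X ~ H_m(n; s)` with a symmetric core `B`,
`P_n[X_{-j} ∈ B_{-j} | X_j = u_j] ≥ P_n[X_{-j} ∈ B_{-j} | X_j = l_j - 1]`,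
stated in cross-multiplied form via the core counts `N_{-j}`. -/
theorem conditional_core_ordering (m : ℕ) (hm : 2 ≤ m) (s l u : Fin m → ℕ)
    (hlu : ∀ j, l j ≤ u j) (hus : ∀ j, u j ≤ s j)
    (hsym : ∀ j, l j + u j = s j)
    (t : ℕ) (ht : t = ∑ j, s j)
    (j : Fin m)
    (Nmj : ℕ → ℕ)
    (hNmj : ∀ r, Nmj r = ∑ x ∈ (Fintype.piFinset fun k : {k : Fin m // k ≠ j} =>
        Finset.Icc (l k.1) (u k.1)).filter (fun x => ∑ k, x k = r),
        ∏ k, (s k.1).choose (x k))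
    (n : ℕ) (h1 : t ≤ 2 * n) (h2 : 1 ≤ l j) (h3 : u j ≤ n) (h4 : n - u j ≤ t - s j) :
    Nmj (n - l j + 1) * (t - s j).choose (n - u j) ≤
      Nmj (n - u j) * (t - s j).choose (n - l j + 1) := by
  classical
  set κ := {k : Fin m // k ≠ j}
  set P : κ → Polynomial ℤ := fun k => _root_.boxPoly (s k.1) (l k.1) (u k.1) with hP
  set Q : Polynomial ℤ := ∏ k : κ, P k with hQ
  have GQ0 : Good Q (∑ k : κ, s k.1) := good_prod Finset.univ P (fun k => s k.1)
    (fun k _ => good_boxPoly (hlu k.1) (hus k.1) (hsym k.1))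
  -- total mass identity
  have hTt : s j + (∑ k : κ, s k.1) = t := by
    rw [ht]
    rw [← Finset.add_sum_erase Finset.univ s (Finset.mem_univ j)]
    congr 1
    rw [Finset.sum_subtype (Finset.univ.erase j) (p := fun k => k ≠ j)
      (by intro x; simp [Finset.mem_erase]) s]
  have hT's : (∑ k : κ, s k.1) = t - s j := by omega
  rw [hT's] at GQ0 hTt
  set T' := t - s j with hT'def
  -- connection : Nmj r = Q.coeff r
  have hconn : ∀ r : ℕ, (Nmj r : ℤ) = Q.coeff r := by
    intro r
    have e1 : Q = ∑ x ∈ (Fintype.piFinset fun k : κ => Finset.Icc (l k.1) (u k.1)),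
        Polynomial.monomial (∑ k, x k) (∏ k, ((s k.1).choose (x k) : ℤ)) := by
      rw [hQ]
      rw [show (∏ k : κ, P k) = ∏ k : κ, ∑ x ∈ Finset.Icc (l k.1) (u k.1),
          Polynomial.monomial x (((s k.1).choose x : ℤ)) from rfl]
      rw [Finset.prod_univ_sum]
      apply Finset.sum_congr rfl
      intro x _
      rw [monomial_prod]
    rw [e1, Polynomial.finset_sum_coeff]
    rw [show (∑ x ∈ (Fintype.piFinset fun k : κ => Finset.Icc (l k.1) (u k.1)),
        (Polynomial.monomial (∑ k, x k) (∏ k, ((s k.1).choose (x k) : ℤ))).coeff r)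
        = ∑ x ∈ (Fintype.piFinset fun k : κ => Finset.Icc (l k.1) (u k.1)),
          if (∑ k, x k) = r then (∏ k, ((s k.1).choose (x k) : ℤ)) else 0 by
      apply Finset.sum_congr rfl; intro x _; rw [Polynomial.coeff_monomial]]
    rw [← Finset.sum_filter]
    rw [hNmj r]
    push_cast
    rfl
  -- ℕ-level facts
  have NmjVanish : ∀ r : ℕ, T' < r → Nmj r = 0 := by
    intro r hr
    have := GQ0.vanish r hr
    rw [← hconn r] at this
    exact_mod_cast this
  have NmjSymm : ∀ r : ℕ, r ≤ T' → Nmj r = Nmj (T' - r) := by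
    intro r hr
    have := GQ0.symm r hr
    rw [← hconn r, ← hconn (T' - r)] at this
    exact_mod_cast this
  have stepN : ∀ q : ℕ, 2*q + 1 ≤ T' →
      Nmj q * T'.choose (q+1) ≤ Nmj (q+1) * T'.choose q := by
    intro q hq
    have hl := GQ0.lstep q hq
    rw [← hconn q, ← hconn (q+1)] at hl
    have hsub : ((T' - q : ℕ) : ℤ) = (T':ℤ) - (q:ℤ) := by omega
    have hlN : (T' - q) * Nmj q ≤ (q+1) * Nmj (q+1) := by
      have hz : (((T' - q) * Nmj q : ℕ) : ℤ) ≤ (((q+1) * Nmj (q+1) : ℕ) : ℤ) := by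
        push_cast [hsub]
        linarith
      exact_mod_cast hz
    apply Nat.le_of_mul_le_mul_left (c := q + 1) _ (Nat.succ_pos q)
    calc (q+1) * (Nmj q * T'.choose (q+1)) = Nmj q * (T'.choose (q+1) * (q+1)) := by ring
      _ = Nmj q * (T'.choose q * (T' - q)) := by rw [Nat.choose_succ_right_eq]
      _ = ((T' - q) * Nmj q) * T'.choose q := by ring
      _ ≤ ((q+1) * Nmj (q+1)) * T'.choose q := Nat.mul_le_mul_right _ hlN
      _ = (q+1) * (Nmj (q+1) * T'.choose q) := by ring
  have chain : ∀ (d b : ℕ), 2*(b+d) ≤ T' →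
      Nmj b * T'.choose (b+d) ≤ Nmj (b+d) * T'.choose b := by
    intro d
    induction d with
    | zero => intro b _; simp
    | succ d ih =>
      intro b hb
      have ih' := ih b (by omega)
      have hst := stepN (b+d) (by omega)
      have hq : b + (d+1) = (b+d) + 1 := by omega
      rw [hq]
      apply Nat.le_of_mul_le_mul_right (c := T'.choose (b+d)) _
        (Nat.choose_pos (show b+d ≤ T' by omega))
      calc Nmj b * T'.choose ((b+d)+1) * T'.choose (b+d)
          = (Nmj b * T'.choose (b+d)) * T'.choose ((b+d)+1) := by ring
        _ ≤ (Nmj (b+d) * T'.choose b) * T'.choose ((b+d)+1) := Nat.mul_le_mul_right _ ih'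
        _ = (Nmj (b+d) * T'.choose ((b+d)+1)) * T'.choose b := by ring
        _ ≤ (Nmj ((b+d)+1) * T'.choose (b+d)) * T'.choose b := Nat.mul_le_mul_right _ hst
        _ = Nmj ((b+d)+1) * T'.choose b * T'.choose (b+d) := by ring
  have mono2 : ∀ a b : ℕ, b ≤ a → a + b ≤ T' →
      Nmj b * T'.choose a ≤ Nmj a * T'.choose b := by
    intro a b hba hab
    rcases le_or_gt (2*a) T' with h | h
    · have := chain (a - b) b (by omega)
      rw [show b + (a - b) = a by omega] at this
      exact this
    · have haT : a ≤ T' := by omega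
      have e1 : Nmj a = Nmj (T' - a) := NmjSymm a haT
      have e2 : T'.choose a = T'.choose (T' - a) := (Nat.choose_symm haT).symm
      rw [e1, e2]
      have := chain ((T' - a) - b) b (by omega)
      rw [show b + ((T' - a) - b) = T' - a by omega] at this
      exact this
  -- final assembly
  show Nmj (n - l j + 1) * T'.choose (n - u j) ≤ Nmj (n - u j) * T'.choose (n - l j + 1)
  have hlun : l j ≤ u j := hlu j
  have hsj : l j + u j = s j := hsym j
  have hab : (n - u j) ≤ (n - l j + 1) := by omega
  have haT : (n - u j) ≤ T' := by omega
  have habT : T' + 1 ≤ (n - u j) + (n - l j + 1) := by omega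
  rcases le_or_gt (n - l j + 1) T' with hbT | hbT
  · have e1 : Nmj (n - l j + 1) = Nmj (T' - (n - l j + 1)) := NmjSymm _ hbT
    have e2 : T'.choose (n - l j + 1) = T'.choose (T' - (n - l j + 1)) :=
      (Nat.choose_symm hbT).symm
    rw [e1, e2]
    exact mono2 (n - u j) (T' - (n - l j + 1)) (by omega) (by omega)
  · rw [NmjVanish _ hbT, zero_mul]
    exact Nat.zero_le _
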